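/- Let n ≥ 2 and write w = (w₁, w₂, w̃) ∈ ℂ × ℂ × ℂ^{n−2}. Let ρ₁(w) = Re(w₁w₂) + |w₁|², and suppose ρ₁(w) < 0 and ‖w‖ < 1/3 (Euclidean norm). With α = (w₁ − conj(w₂))/2, Σ_w = { ζ ∈ ℂ : |ζ − α|² ≤ |α|² − |w₁|² } and φ_w(ζ) = ( ζ, |w₁|²/ζ − 2·conj(α), w̃ ), one has ‖φ_w(ζ)‖ ≤ 3‖w‖ < 1 for every ζ ∈ Σ_w; in particular the analytic disc D_w = φ_w(Σ_w) is contained in the open unit ball of ℂ^n. -/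

import Mathlib

open Complex

noncomputable section

/-- `ρ₁(w) = Re(w₁ w₂) + |w₁|²` on `ℂ^n` (with `n = m + 2 ≥ 2`). -/
def rho1 (m : ℕ) (w : EuclideanSpace ℂ (Fin (m + 2))) : ℝ :=
  (w 0 * w 1).re + ‖w 0‖ ^ 2

/-- For `w` with `ρ₁(w) < 0` and `‖w‖ < 1/3`, the whole analytic disc
`D_w = φ_w(Σ_w)` satisfies `‖φ_w(ζ)‖ ≤ 3‖w‖ < 1`, hence lies in the open unit ball. -/
theorem disc_in_unit_ball (m : ℕ) (w : EuclideanSpace ℂ (Fin (m + 2)))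
    (hw : rho1 m w < 0) (hwn : ‖w‖ < 1 / 3) :
    let α : ℂ := (w 0 - (starRingEnd ℂ) (w 1)) / 2
    let S : Set ℂ := {ζ : ℂ | ‖ζ - α‖ ^ 2 ≤ ‖α‖ ^ 2 - ‖w 0‖ ^ 2}
    let φ : ℂ → EuclideanSpace ℂ (Fin (m + 2)) := fun ζ =>
      WithLp.toLp 2 (fun i => if i = 0 then ζ
        else if i = 1 then ((‖w 0‖ ^ 2 : ℝ) : ℂ) / ζ - 2 * (starRingEnd ℂ) α
        else w i)
    (∀ ζ ∈ S, ‖φ ζ‖ ≤ 3 * ‖w‖) ∧ 3 * ‖w‖ < 1 := by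
  intro α S φ
  have hw0 : w 0 ≠ 0 := by
    intro h
    rw [rho1, h] at hw
    simp at hw
  have ha : 0 < ‖w 0‖ := norm_pos_iff.mpr hw0
  have hwnn : (0:ℝ) ≤ ‖w‖ := norm_nonneg w
  refine ⟨?_, by linarith⟩
  intro ζ hζ
  have hζS : ‖ζ - α‖ ^ 2 ≤ ‖α‖ ^ 2 - ‖w 0‖ ^ 2 := hζ
  have hζ0 : ζ ≠ 0 := by
    intro h
    rw [h, zero_sub, norm_neg] at hζS
    nlinarith
  have hs : 0 < ‖ζ‖ := norm_pos_iff.mpr hζ0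
  -- key quadratic inequality
  have htri : |‖ζ‖ - ‖α‖| ≤ ‖ζ - α‖ := abs_norm_sub_norm_le ζ α
  have key : ‖ζ‖ ^ 2 - 2 * ‖α‖ * ‖ζ‖ + ‖w 0‖ ^ 2 ≤ 0 := by
    nlinarith [_root_.sq_abs (‖ζ‖ - ‖α‖), abs_nonneg (‖ζ‖ - ‖α‖), norm_nonneg (ζ - α)]
  have hA : (0:ℝ) ≤ ‖α‖ := norm_nonneg α
  have hs2A : ‖ζ‖ ≤ 2 * ‖α‖ := by nlinarith
  have hdiv : ‖w 0‖ ^ 2 / ‖ζ‖ ≤ 2 * ‖α‖ - ‖ζ‖ := by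
    rw [div_le_iff₀ hs]; nlinarith
  -- second coordinate bound
  set c : ℂ := ((‖w 0‖ ^ 2 : ℝ) : ℂ) / ζ - 2 * (starRingEnd ℂ) α with hc
  have hcb : ‖c‖ ≤ 4 * ‖α‖ - ‖ζ‖ := by
    have h1 : ‖c‖ ≤ ‖((‖w 0‖ ^ 2 : ℝ) : ℂ) / ζ‖ + ‖2 * (starRingEnd ℂ) α‖ := norm_sub_le _ _
    have h2 : ‖((‖w 0‖ ^ 2 : ℝ) : ℂ) / ζ‖ = ‖w 0‖ ^ 2 / ‖ζ‖ := by
      rw [norm_div, Complex.norm_real, Real.norm_of_nonneg (by positivity)]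
    have h3 : ‖2 * (starRingEnd ℂ) α‖ = 2 * ‖α‖ := by
      rw [norm_mul, RCLike.norm_conj]; norm_num
    rw [h2, h3] at h1
    linarith
  have hcnn : (0:ℝ) ≤ ‖c‖ := norm_nonneg c
  -- norm decomposition of φ ζ
  have e0 : φ ζ 0 = ζ := rfl
  have e1 : φ ζ 1 = c := rfl
  have e2 : ∀ i : Fin m, φ ζ i.succ.succ = w i.succ.succ := by
    intro i
    show (if i.succ.succ = 0 then ζ else if i.succ.succ = 1 then c else w i.succ.succ) = _
    rw [if_neg (Fin.succ_ne_zero _), if_neg]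
    intro h
    rw [← Fin.succ_zero_eq_one, Fin.succ_inj] at h
    exact Fin.succ_ne_zero _ h
  have hφ : ‖φ ζ‖ ^ 2 = ‖ζ‖ ^ 2 + ‖c‖ ^ 2 + ∑ i : Fin m, ‖w i.succ.succ‖ ^ 2 := by
    rw [EuclideanSpace.norm_eq,
      Real.sq_sqrt (Finset.sum_nonneg fun i _ => sq_nonneg _)]
    rw [Fin.sum_univ_succ, Fin.sum_univ_succ]
    simp only [Fin.succ_zero_eq_one, e0, e1, e2]
    ring
  have hwdec : ‖w‖ ^ 2 = ‖w 0‖ ^ 2 + ‖w 1‖ ^ 2 + ∑ i : Fin m, ‖w i.succ.succ‖ ^ 2 := by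
    rw [EuclideanSpace.norm_eq,
      Real.sq_sqrt (Finset.sum_nonneg fun i _ => sq_nonneg _)]
    rw [Fin.sum_univ_succ, Fin.sum_univ_succ]
    simp [Fin.succ_zero_eq_one]
    ring
  -- bound on α
  have h2A : 2 * ‖α‖ ≤ ‖w 0‖ + ‖w 1‖ := by
    have h1 : ‖w 0 - (starRingEnd ℂ) (w 1)‖ ≤ ‖w 0‖ + ‖(starRingEnd ℂ) (w 1)‖ :=
      norm_sub_le _ _
    have h2 : ‖α‖ = ‖w 0 - (starRingEnd ℂ) (w 1)‖ / 2 := by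
      simp [α, norm_div]
    rw [RCLike.norm_conj] at h1
    rw [h2]; linarith
  -- finish
  have hR : (0:ℝ) ≤ ∑ i : Fin m, ‖w i.succ.succ‖ ^ 2 :=
    Finset.sum_nonneg fun i _ => sq_nonneg _
  have hfinal : ‖φ ζ‖ ^ 2 ≤ (3 * ‖w‖) ^ 2 := by
    rw [hφ]
    nlinarith [sq_nonneg (‖w 0‖ - ‖w 1‖), norm_nonneg (w 1), hs, hs2A, hcb, hcnn, key,
      hwdec, h2A, hR, hA]
  have h3w : (0:ℝ) ≤ 3 * ‖w‖ := by linarith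
  exact le_of_pow_le_pow_left₀ two_ne_zero h3w hfinal
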